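/- arXiv:2106.00046 — 2 statements merged into one kernel-verified Lean document; each statement's English description precedes it below -/
import Mathlib

section
/- Let M be a loopless matroid on E, m ≥ 1, and Q = Q_m(M) with tip a. The flats F of Q containing a are exactly the cones of flats of M; indeed, F = q(F ∩ E). -/
open Set Matroid

namespace ConePaper

variable {α : Type*}

/-- The rank of a set in a matroid: the supremum of sizes of independent subsets. -/
noncomputable def rk (M : Matroid α) (X : Set α) : ℕ :=
  sSup {n : ℕ | ∃ I, M.Indep I ∧ I ⊆ X ∧ I.ncard = n}

/-- A loopless matroid: every singleton of the ground set is independent. -/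
def Loopless (M : Matroid α) : Prop := ∀ e ∈ M.E, M.Indep {e}

/-- A coloop: an element of the ground set lying in every base. -/
def IsColoop (M : Matroid α) (e : α) : Prop := e ∈ M.E ∧ ∀ B, M.IsBase B → e ∈ B

/-- A circuit: a minimal dependent set. -/
def IsCircuit (M : Matroid α) (C : Set α) : Prop :=
  C ⊆ M.E ∧ ¬ M.Indep C ∧ ∀ x ∈ C, M.Indep (C \ {x})

/-- A cyclic flat: a flat whose restriction has no coloops. -/
def CyclicFlat (M : Matroid α) (F : Set α) : Prop :=
  M.IsFlat F ∧ ∀ e ∈ F, ¬ IsColoop (M ↾ F) e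

/-- Deletion of a set from a matroid. -/
def mdel (M : Matroid α) (X : Set α) : Matroid α := M ↾ (M.E \ X)

/-- The cone `q(S) = S ∪ {a} ∪ ⋃_{e ∈ S} T e`. -/
def cone (T : α → Set α) (a : α) (S : Set α) : Set α := S ∪ {a} ∪ ⋃ e ∈ S, T e

/-- The projection `p(S) = (S ∩ E) ∪ {e ∈ E : S ∩ T e ≠ ∅}`. -/
def proj (E : Set α) (T : α → Set α) (S : Set α) : Set α :=
  (S ∩ E) ∪ {e ∈ E | (S ∩ T e).Nonempty}

/-- `FreeCone M Q T a m` says that `Q` is the free `m`-cone of the loopless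
matroid `M`, with extra points `T e` (of size `m`) for `e ∈ M.E` and tip `a`:
its cyclic flats are those of `M` (with the same rank) together with the cones
of nonempty flats of `M` (with rank one greater). -/
structure FreeCone (M Q : Matroid α) (T : α → Set α) (a : α) (m : ℕ) : Prop where
  hm : 1 ≤ m
  hMfin : M.E.Finite
  hloopless : Loopless M
  hTfin : ∀ e ∈ M.E, (T e).Finite
  hTcard : ∀ e ∈ M.E, (T e).ncard = m
  hTdisjE : ∀ e ∈ M.E, Disjoint (T e) M.E
  hTdisj : ∀ e ∈ M.E, ∀ f ∈ M.E, e ≠ f → Disjoint (T e) (T f)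
  ha : a ∉ M.E ∪ ⋃ e ∈ M.E, T e
  hQE : Q.E = M.E ∪ (⋃ e ∈ M.E, T e) ∪ {a}
  hcyclic : ∀ F, CyclicFlat Q F ↔
      (CyclicFlat M F ∨ ∃ F', M.IsFlat F' ∧ F'.Nonempty ∧ F = cone T a F')
  hrank1 : ∀ F, CyclicFlat M F → rk Q F = rk M F
  hrank2 : ∀ F', M.IsFlat F' → F'.Nonempty → rk Q (cone T a F') = rk M F' + 1

/-- A flag of a rank-`k` matroid: a chain of flats, one of each rank `0,…,k`. -/
def IsFlag (N : Matroid α) (k : ℕ) (X : ℕ → Set α) : Prop :=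
  (∀ i ≤ k, N.IsFlat (X i) ∧ rk N (X i) = i) ∧ ∀ i < k, X i ⊂ X (i + 1)

lemma flat_closure (N : Matroid α) (X : Set α) : N.IsFlat (N.closure X) := by
  rw [Matroid.closure_def, Set.sInter_eq_iInter]
  have hne : Nonempty {F // F ∈ {F | N.IsFlat F ∧ X ∩ N.E ⊆ F}} :=
    ⟨⟨N.E, ⟨N.ground_isFlat, Set.inter_subset_right⟩⟩⟩
  exact Matroid.IsFlat.iInter fun F => F.2.1

/-! ### Auxiliary lemmas about `rk` -/

section RkAux

variable {N : Matroid α} {I J X Z : Set α}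

lemma rk_bddAbove (hE : N.E.Finite) (X : Set α) :
    BddAbove {n : ℕ | ∃ I, N.Indep I ∧ I ⊆ X ∧ I.ncard = n} := by
  refine ⟨N.E.ncard, ?_⟩
  rintro n ⟨I, hI, -, rfl⟩
  exact Set.ncard_le_ncard hI.subset_ground hE

lemma le_rk (hE : N.E.Finite) (hI : N.Indep I) (hIX : I ⊆ X) : I.ncard ≤ rk N X :=
  le_csSup (rk_bddAbove hE X) ⟨I, hI, hIX, rfl⟩

lemma rk_le {n : ℕ} (h : ∀ I, N.Indep I → I ⊆ X → I.ncard ≤ n) : rk N X ≤ n :=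
  csSup_le ⟨0, ∅, N.empty_indep, empty_subset X, Set.ncard_empty α⟩
    (by rintro k ⟨I, hI, hIX, rfl⟩; exact h I hI hIX)

lemma rk_closure_eq (hE : N.E.Finite) (hI : N.IsBasis I X) : rk N (N.closure X) = I.ncard := by
  refine le_antisymm (rk_le fun J hJ hJX => ?_)
    (le_rk hE hI.indep (hI.subset.trans (N.subset_closure X hI.subset_ground)))
  obtain ⟨B, hB, hJB⟩ := hJ.subset_isBasis_of_subset hJX (N.closure_subset_ground X)
  have h1 : B.encard = I.encard :=
    hB.isBase_restrict.encard_eq_encard_of_isBase (hI.isBasis_closure_right.isBase_restrict)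
  have hBfin : B.Finite := hE.subset hB.indep.subset_ground
  calc J.ncard ≤ B.ncard := Set.ncard_le_ncard hJB hBfin
    _ = I.ncard := by rw [Set.ncard_def, h1, ← Set.ncard_def]

lemma spans_of_rk_le (hE : N.E.Finite) (hJ : N.Indep J) (hJZ : J ⊆ Z) (hZE : Z ⊆ N.E)
    (hr : rk N Z ≤ J.ncard) : Z ⊆ N.closure J := by
  obtain ⟨B, hB, hJB⟩ := hJ.subset_isBasis_of_subset hJZ hZE
  have hBfin : B.Finite := hE.subset hB.indep.subset_ground
  have hJBeq : J = B :=
    Set.eq_of_subset_of_ncard_le hJB ((le_rk hE hB.indep hB.subset).trans hr) hBfin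
  rw [hJBeq]
  exact hB.subset_closure

end RkAux

/-! ### Auxiliary lemmas about `cone` -/

section ConeAux

variable {T : α → Set α} {a : α} {S S' : Set α} {e : α}

lemma mem_cone_tip (T : α → Set α) (a : α) (S : Set α) : a ∈ cone T a S :=
  Or.inl (Or.inr rfl)

lemma subset_cone (T : α → Set α) (a : α) (S : Set α) : S ⊆ cone T a S :=
  fun _ hx => Or.inl (Or.inl hx)

lemma T_subset_cone (he : e ∈ S) : T e ⊆ cone T a S :=
  fun _ hx => Or.inr (Set.mem_biUnion he hx)

lemma cone_mono (h : S ⊆ S') : cone T a S ⊆ cone T a S' :=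
  Set.union_subset_union (Set.union_subset_union_left _ h)
    (Set.biUnion_subset_biUnion_left h)

lemma cone_empty : cone T a (∅ : Set α) = {a} := by
  simp [cone]

end ConeAux

/-! ### Lemmas about the free cone -/

section FCAux

variable {M Q : Matroid α} {T : α → Set α} {a : α} {m : ℕ} {S F F' : Set α} {e x : α}

lemma haM (hFC : FreeCone M Q T a m) : a ∉ M.E := fun h => hFC.ha (Or.inl h)

lemma haT (hFC : FreeCone M Q T a m) (he : e ∈ M.E) : a ∉ T e :=
  fun h => hFC.ha (Or.inr (Set.mem_biUnion he h))

lemma haQ (hFC : FreeCone M Q T a m) : a ∈ Q.E := by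
  rw [hFC.hQE]; exact Or.inr rfl

lemma hMQ (hFC : FreeCone M Q T a m) : M.E ⊆ Q.E := by
  rw [hFC.hQE]; exact fun x hx => Or.inl (Or.inl hx)

lemma hQfin (hFC : FreeCone M Q T a m) : Q.E.Finite := by
  rw [hFC.hQE]
  exact (hFC.hMfin.union (Set.Finite.biUnion hFC.hMfin hFC.hTfin)).union
    (Set.finite_singleton a)

lemma cone_inter_ground (hFC : FreeCone M Q T a m) (hS : S ⊆ M.E) :
    cone T a S ∩ M.E = S := by
  apply subset_antisymm
  · rintro x ⟨hx, hxE⟩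
    rcases hx with (h | h) | h
    · exact h
    · rw [Set.mem_singleton_iff] at h
      subst h
      exact absurd hxE (haM hFC)
    · obtain ⟨e, he, hxe⟩ := Set.mem_iUnion₂.1 h
      exact ((hFC.hTdisjE e (hS he)).le_bot ⟨hxe, hxE⟩).elim
  · exact Set.subset_inter (subset_cone T a S) hS

lemma cone_subset_ground (hFC : FreeCone M Q T a m) (hS : S ⊆ M.E) :
    cone T a S ⊆ Q.E := by
  rw [hFC.hQE]
  rintro x ((h | h) | h)
  · exact Or.inl (Or.inl (hS h))
  · exact Or.inr h
  · obtain ⟨e, he, hxe⟩ := Set.mem_iUnion₂.1 h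
    exact Or.inl (Or.inr (Set.mem_biUnion (hS he) hxe))

lemma hMcl0 (hFC : FreeCone M Q T a m) : M.closure ∅ = ∅ := by
  apply Set.eq_empty_iff_forall_notMem.2
  intro x hx
  have hxE : x ∈ M.E := Matroid.mem_ground_of_mem_closure hx
  have h2 := (hFC.hloopless x hxE).notMem_closure_diff_of_mem (Set.mem_singleton x)
  rw [Set.diff_self] at h2
  exact h2 hx

lemma hMflat_empty (hFC : FreeCone M Q T a m) : M.IsFlat ∅ := by
  have h := flat_closure M ∅
  rwa [hMcl0 hFC] at h

lemma hQcl0 (hFC : FreeCone M Q T a m) : Q.closure ∅ = ∅ := by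
  set L := Q.closure ∅ with hL
  have hrkL0 : rk Q L ≤ 0 := by
    refine rk_le fun I hI hIL => ?_
    have hIe : I = ∅ := by
      apply Set.eq_empty_iff_forall_notMem.2
      intro y hy
      have hind : Q.Indep {y} := hI.subset (Set.singleton_subset_iff.2 hy)
      have h2 := hind.notMem_closure_diff_of_mem (Set.mem_singleton y)
      rw [Set.diff_self] at h2
      exact h2 (hIL hy)
    simp [hIe]
  have hcyc : CyclicFlat Q L := by
    refine ⟨flat_closure Q ∅, fun e heL hcol => ?_⟩
    obtain ⟨B, hB⟩ := (Q ↾ L).exists_isBase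
    have heB := hcol.2 B hB
    have hind : Q.Indep {e} :=
      ((restrict_indep_iff.1 hB.indep).1).subset (Set.singleton_subset_iff.2 heB)
    have h2 := hind.notMem_closure_diff_of_mem (Set.mem_singleton e)
    rw [Set.diff_self] at h2
    exact h2 heL
  rcases (hFC.hcyclic L).1 hcyc with hML | ⟨F', hF', hFne, hLeq⟩
  · by_contra hne
    obtain ⟨x, hx⟩ := Set.nonempty_iff_ne_empty.2 hne
    have hxE : x ∈ M.E := hML.1.subset_ground hx
    have h1 : 1 ≤ rk M L := by
      simpa using le_rk hFC.hMfin (hFC.hloopless x hxE) (Set.singleton_subset_iff.2 hx)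
    have h2 := hFC.hrank1 L hML
    omega
  · exfalso
    have h2 : rk Q L = rk M F' + 1 := by
      rw [hLeq]; exact hFC.hrank2 F' hF' hFne
    omega

lemma hQindep_singleton (hFC : FreeCone M Q T a m) (hx : x ∈ Q.E) : Q.Indep {x} := by
  have h : Q.Indep (insert x ∅) := by
    rw [Matroid.insert_indep_iff]
    exact ⟨Q.empty_indep, fun _ => ⟨hx, by simp [hQcl0 hFC]⟩⟩
  simpa using h

lemma hQcl_tip (hFC : FreeCone M Q T a m) : Q.closure {a} = {a} := by
  have haQ' := haQ hFC
  set K := Q.closure {a} with hK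
  have hKE : K ⊆ Q.E := Q.closure_subset_ground {a}
  have haK : a ∈ K := Q.subset_closure {a} (Set.singleton_subset_iff.2 haQ') rfl
  have hcl_of : ∀ f ∈ K, K ⊆ Q.closure {f} := by
    intro f hf
    have hfa : f ∈ Q.closure (insert a ∅) \ Q.closure ∅ := by
      constructor
      · simpa using hf
      · simp [hQcl0 hFC]
    have hex := Matroid.closure_exchange hfa
    have haf : a ∈ Q.closure {f} := by simpa using hex.1
    exact Matroid.closure_subset_closure_of_subset_closure (Set.singleton_subset_iff.2 haf)
  apply subset_antisymm _ (Q.subset_closure {a} (Set.singleton_subset_iff.2 haQ'))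
  by_contra hsub
  obtain ⟨x, hxK, hxa⟩ := Set.not_subset.1 hsub
  have hcyc : CyclicFlat Q K := by
    refine ⟨flat_closure Q {a}, fun e heK hcol => ?_⟩
    obtain ⟨f, hfK, hfe⟩ : ∃ f ∈ K, f ≠ e := by
      rcases eq_or_ne e a with rfl | hea
      · exact ⟨x, hxK, hxa⟩
      · exact ⟨a, haK, fun h => hea h.symm⟩
    have hbasis : Q.IsBasis {f} K :=
      (hQindep_singleton hFC (hKE hfK)).isBasis_of_subset_of_subset_closure
        (Set.singleton_subset_iff.2 hfK) (hcl_of f hfK)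
    have hfb := hcol.2 {f} hbasis.isBase_restrict
    exact hfe (Set.mem_singleton_iff.1 hfb).symm
  rcases (hFC.hcyclic K).1 hcyc with hML | ⟨F', hF', hFne, hKeq⟩
  · exact haM hFC (hML.1.subset_ground haK)
  · have h2 : rk Q K = rk M F' + 1 := by
      rw [hKeq]; exact hFC.hrank2 F' hF' hFne
    obtain ⟨y, hy⟩ := hFne
    have h1 : 1 ≤ rk M F' := by
      simpa using le_rk hFC.hMfin (hFC.hloopless y (hF'.subset_ground hy))
        (Set.singleton_subset_iff.2 hy)
    have h3 : rk Q K ≤ 1 := by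
      refine rk_le fun I hI hIK => ?_
      rw [Set.ncard_le_one ((hQfin hFC).subset hI.subset_ground)]
      intro u hu v hv
      have hvK : v ∈ Q.closure {u} := hcl_of u (hIK hu) (hIK hv)
      have huI : Q.Indep {u} := hI.subset (Set.singleton_subset_iff.2 hu)
      obtain ⟨-, himp⟩ := (huI.mem_closure_iff').1 hvK
      have hvu : v ∈ ({u} : Set α) :=
        himp (hI.subset (Set.insert_subset hv (Set.singleton_subset_iff.2 hu)))
      exact (Set.mem_singleton_iff.1 hvu).symm
    omega

lemma hQflat_tip (hFC : FreeCone M Q T a m) : Q.IsFlat {a} := by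
  have h := flat_closure Q {a}
  rwa [hQcl_tip hFC] at h

lemma cone_flat (hFC : FreeCone M Q T a m) (hF' : M.IsFlat F') : Q.IsFlat (cone T a F') := by
  rcases F'.eq_empty_or_nonempty with rfl | hne
  · rw [cone_empty]; exact hQflat_tip hFC
  · exact ((hFC.hcyclic _).2 (Or.inr ⟨F', hF', hne, rfl⟩)).1

lemma pair_tip_indep (hFC : FreeCone M Q T a m) (hx : x ∈ Q.E) (hxa : x ≠ a) :
    Q.Indep {x, a} := by
  have hia : Q.Indep {a} := hQindep_singleton hFC (haQ hFC)
  have h : Q.Indep (insert x {a}) := by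
    rw [hia.insert_indep_iff]
    left
    rw [hQcl_tip hFC]
    exact ⟨hx, hxa⟩
  exact h

lemma rk_cone_singleton (hFC : FreeCone M Q T a m) (he : e ∈ M.E) :
    rk Q (cone T a (M.closure {e})) = 2 := by
  have hb : M.IsBasis {e} {e} := (hFC.hloopless e he).isBasis_self
  have h1 : rk M (M.closure {e}) = 1 := by
    simpa using rk_closure_eq hFC.hMfin hb
  rw [hFC.hrank2 _ (flat_closure M {e}) ⟨e, M.mem_closure_self e he⟩, h1]

lemma cone_closure_subset_flat (hFC : FreeCone M Q T a m) (hF : Q.IsFlat F)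
    (he : e ∈ M.E) (hx : x ∈ cone T a (M.closure {e})) (hxa : x ≠ a) (hxF : x ∈ F)
    (haF : a ∈ F) : cone T a (M.closure {e}) ⊆ F := by
  set Z := cone T a (M.closure {e}) with hZ
  have hclE : M.closure {e} ⊆ M.E := M.closure_subset_ground {e}
  have hZE : Z ⊆ Q.E := cone_subset_ground hFC hclE
  have hJ : Q.Indep {x, a} := pair_tip_indep hFC (hZE hx) hxa
  have hJZ : ({x, a} : Set α) ⊆ Z := by
    intro y hy
    rcases hy with rfl | hy
    · exact hx
    · rw [Set.mem_singleton_iff] at hy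
      rw [hy]
      exact mem_cone_tip T a _
  have hrk : rk Q Z ≤ ({x, a} : Set α).ncard := by
    rw [Set.ncard_pair hxa, rk_cone_singleton hFC he]
  have hspan := spans_of_rk_le (hQfin hFC) hJ hJZ hZE hrk
  have hsub : ({x, a} : Set α) ⊆ F :=
    Set.insert_subset hxF (Set.singleton_subset_iff.2 haF)
  calc Z ⊆ Q.closure {x, a} := hspan
    _ ⊆ Q.closure F := Q.closure_subset_closure hsub
    _ = F := hF.closure

lemma indep_insert_tip (hFC : FreeCone M Q T a m) {I : Set α} (hIfin : I.Finite)
    (hI : M.Indep I) : Q.Indep (insert a I) := by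
  revert hI
  refine Set.Finite.induction_on (motive := fun s _ => M.Indep s → Q.Indep (insert a s)) I
    hIfin (fun _ => ?_) ?_
  · simpa using hQindep_singleton hFC (haQ hFC)
  · intro e s hes hsfin IH hins
    have hs : M.Indep s := hins.subset (Set.subset_insert e s)
    have hQs : Q.Indep (insert a s) := IH hs
    have heE : e ∈ M.E := hins.subset_ground (Set.mem_insert e s)
    have hecl : e ∉ M.closure s := ((hs.insert_indep_iff_of_notMem hes).1 hins).2
    have hZflat : Q.IsFlat (cone T a (M.closure s)) := cone_flat hFC (flat_closure M s)
    have hsubZ : insert a s ⊆ cone T a (M.closure s) := by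
      apply Set.insert_subset (mem_cone_tip T a _)
      exact (M.subset_closure s hs.subset_ground).trans (subset_cone T a _)
    have hclsub : Q.closure (insert a s) ⊆ cone T a (M.closure s) := by
      have h := Q.closure_subset_closure hsubZ
      rwa [hZflat.closure] at h
    have henZ : e ∉ cone T a (M.closure s) := by
      intro hmem
      have hmem2 : e ∈ cone T a (M.closure s) ∩ M.E := ⟨hmem, heE⟩
      rw [cone_inter_ground hFC (M.closure_subset_ground s)] at hmem2
      exact hecl hmem2
    have hfin : Q.Indep (insert e (insert a s)) := by
      rw [hQs.insert_indep_iff]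
      exact Or.inl ⟨hMQ hFC heE, fun h => henZ (hclsub h)⟩
    rwa [Set.insert_comm] at hfin

lemma flat_eq_cone (hFC : FreeCone M Q T a m) (hF : Q.IsFlat F) (haF : a ∈ F) :
    M.IsFlat (F ∩ M.E) ∧ F = cone T a (F ∩ M.E) := by
  have hFE : F ⊆ Q.E := hF.subset_ground
  have claimA : ∀ e, e ∈ F → e ∈ M.E → T e ⊆ F := by
    intro e heF heE
    have hZF := cone_closure_subset_flat hFC hF heE
      ((subset_cone T a _) (M.mem_closure_self e heE))
      (fun h => haM hFC (h ▸ heE)) heF haF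
    exact (T_subset_cone (M.mem_closure_self e heE)).trans hZF
  have claimB : ∀ e, e ∈ M.E → ∀ x, x ∈ T e → x ∈ F → e ∈ F := by
    intro e heE x hxe hxF
    have hxa : x ≠ a := fun h => haT hFC heE (h ▸ hxe)
    have hZF := cone_closure_subset_flat hFC hF heE
      (T_subset_cone (M.mem_closure_self e heE) hxe) hxa hxF haF
    exact hZF ((subset_cone T a _) (M.mem_closure_self e heE))
  have hFsub : F ⊆ cone T a (F ∩ M.E) := by
    intro x hxF
    have hxQ := hFE hxF
    rw [hFC.hQE] at hxQ
    rcases hxQ with (hxM | hxT) | hxa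
    · exact Or.inl (Or.inl ⟨hxF, hxM⟩)
    · obtain ⟨e, heE, hxe⟩ := Set.mem_iUnion₂.1 hxT
      have heF : e ∈ F := claimB e heE x hxe hxF
      exact Or.inr (Set.mem_biUnion ⟨heF, heE⟩ hxe)
    · rw [Set.mem_singleton_iff] at hxa
      rw [hxa]
      exact mem_cone_tip T a _
  have hconesub : cone T a (F ∩ M.E) ⊆ F := by
    intro x hx
    rcases hx with (h | h) | h
    · exact h.1
    · rw [Set.mem_singleton_iff] at h
      rw [h]
      exact haF
    · obtain ⟨e, ⟨heF, heE⟩, hxe⟩ := Set.mem_iUnion₂.1 h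
      exact claimA e heF heE hxe
  have hFeq : F = cone T a (F ∩ M.E) := subset_antisymm hFsub hconesub
  rcases (F ∩ M.E).eq_empty_or_nonempty with hempty | hne
  · refine ⟨?_, hFeq⟩
    rw [hempty]
    exact hMflat_empty hFC
  · set G := M.closure (F ∩ M.E) with hG
    have hFME : F ∩ M.E ⊆ M.E := Set.inter_subset_right
    obtain ⟨I, hI⟩ := M.exists_isBasis (F ∩ M.E) hFME
    have hIfin : I.Finite := hFC.hMfin.subset hI.indep.subset_ground
    have haI : a ∉ I := fun h => haM hFC (hI.indep.subset_ground h)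
    have hJindep : Q.Indep (insert a I) := indep_insert_tip hFC hIfin hI.indep
    have hGflat : M.IsFlat G := flat_closure M _
    have hGne : G.Nonempty := hne.mono (M.subset_closure _ hFME)
    have hrkZ : rk Q (cone T a G) = I.ncard + 1 := by
      rw [hFC.hrank2 G hGflat hGne, rk_closure_eq hFC.hMfin hI]
    have hJcard : (insert a I).ncard = I.ncard + 1 :=
      Set.ncard_insert_of_notMem haI hIfin
    have hJZ : insert a I ⊆ cone T a G :=
      Set.insert_subset (mem_cone_tip T a G)
        ((hI.subset.trans (M.subset_closure _ hFME)).trans (subset_cone T a G))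
    have hZE : cone T a G ⊆ Q.E := cone_subset_ground hFC (M.closure_subset_ground _)
    have hspan := spans_of_rk_le (hQfin hFC) hJindep hJZ hZE
      (by rw [hrkZ, hJcard])
    have hJF : insert a I ⊆ F :=
      Set.insert_subset haF (hI.subset.trans Set.inter_subset_left)
    have hZF : cone T a G ⊆ F := by
      calc cone T a G ⊆ Q.closure (insert a I) := hspan
        _ ⊆ Q.closure F := Q.closure_subset_closure hJF
        _ = F := hF.closure
    have hFZ : F ⊆ cone T a G := hFsub.trans (cone_mono (M.subset_closure _ hFME))
    have hFeq2 : F = cone T a G := subset_antisymm hFZ hZF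
    have hFMG : F ∩ M.E = G := by
      rw [hFeq2, cone_inter_ground hFC (M.closure_subset_ground _)]
    constructor
    · rw [hFMG]; exact hGflat
    · rw [hFMG]; exact hFeq2

end FCAux

/-- The flats of the free `m`-cone containing the tip are exactly the cones of
flats of `M`; indeed such a flat `F` equals `q(F ∩ E)`. -/
theorem flats_containing_tip {M Q : Matroid α} {T : α → Set α} {a : α} {m : ℕ}
    (hFC : FreeCone M Q T a m) :
    (∀ F, (Q.IsFlat F ∧ a ∈ F) ↔ ∃ F', M.IsFlat F' ∧ F = cone T a F') ∧
    (∀ F, Q.IsFlat F → a ∈ F → F = cone T a (F ∩ M.E)) := by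
  constructor
  · intro F
    constructor
    · rintro ⟨hF, haF⟩
      obtain ⟨hflat, heq⟩ := flat_eq_cone hFC hF haF
      exact ⟨F ∩ M.E, hflat, heq⟩
    · rintro ⟨F', hF', rfl⟩
      exact ⟨cone_flat hFC hF', mem_cone_tip T a F'⟩
  · intro F hF haF
    exact (flat_eq_cone hFC hF haF).2
end ConePaper
end

section
/- Let M be a matroid and S a nonempty subset of its ground set. Then r(M \ S) = r(M) if and only if there exists a flag (maximal chain of flats, one of each rank 0, 1, …, r(M)) (X_0, X_1, …, X_{r(M)}) of M that does not collapse in M \ S, i.e., X_i - S ≠ X_{i+1} - S for every i. -/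
open Set Matroid

namespace ConePaper

variable {α : Type*}

lemma closure_flat' (M : Matroid α) (X : Set α) : M.IsFlat (M.closure X) := by
  rw [Matroid.closure_def]
  have hne : {F | M.IsFlat F ∧ X ∩ M.E ⊆ F}.Nonempty := ⟨M.E, M.ground_isFlat, inter_subset_right⟩
  have : Nonempty {F // F ∈ {F | M.IsFlat F ∧ X ∩ M.E ⊆ F}} := hne.to_subtype
  rw [sInter_eq_iInter]
  exact Matroid.IsFlat.iInter fun F => F.2.1

lemma ncard_le_of_indep_basis {M : Matroid α} {I J X : Set α} (hE : M.E.Finite)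
    (hI : M.Indep I) (hIX : I ⊆ X) (hJ : M.IsBasis J X) : I.ncard ≤ J.ncard := by
  obtain ⟨J', hJ', hIJ'⟩ := hI.subset_isBasis_of_subset hIX hJ.subset_ground
  have hcard : J'.encard = J.encard := hJ'.encard_eq_encard hJ
  have hfinJ' : J'.Finite := hE.subset hJ'.indep.subset_ground
  have : J'.ncard = J.ncard := by
    rw [Set.ncard_def, Set.ncard_def, hcard]
  exact le_trans (Set.ncard_le_ncard hIJ' hfinJ') this.le

lemma rk_eq_ncard_of_basis {M : Matroid α} {J X : Set α} (hE : M.E.Finite)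
    (hJ : M.IsBasis J X) : rk M X = J.ncard := by
  have hne : {n : ℕ | ∃ I, M.Indep I ∧ I ⊆ X ∧ I.ncard = n}.Nonempty :=
    ⟨0, ∅, M.empty_indep, empty_subset _, Set.ncard_empty _⟩
  have hbdd : BddAbove {n : ℕ | ∃ I, M.Indep I ∧ I ⊆ X ∧ I.ncard = n} := by
    refine ⟨J.ncard, ?_⟩
    rintro n ⟨I, hI, hIX, rfl⟩
    exact ncard_le_of_indep_basis hE hI hIX hJ
  apply le_antisymm
  · apply csSup_le hne
    rintro n ⟨I, hI, hIX, rfl⟩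
    exact ncard_le_of_indep_basis hE hI hIX hJ
  · exact le_csSup hbdd ⟨J, hJ.indep, hJ.subset, rfl⟩

lemma indep_ncard_le_rk {M : Matroid α} {I X : Set α} (hE : M.E.Finite)
    (hI : M.Indep I) (hIX : I ⊆ X) (hX : X ⊆ M.E) : I.ncard ≤ rk M X := by
  obtain ⟨J, hJ⟩ := M.exists_isBasis X hX
  rw [rk_eq_ncard_of_basis hE hJ]
  exact ncard_le_of_indep_basis hE hI hIX hJ

lemma rk_mono {M : Matroid α} {X Y : Set α} (hE : M.E.Finite)
    (hXY : X ⊆ Y) (hY : Y ⊆ M.E) : rk M X ≤ rk M Y := by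
  obtain ⟨J, hJ⟩ := M.exists_isBasis X (hXY.trans hY)
  rw [rk_eq_ncard_of_basis hE hJ]
  exact indep_ncard_le_rk hE hJ.indep (hJ.subset.trans hXY) hY

lemma rk_closure_indep {M : Matroid α} {I : Set α} (hE : M.E.Finite)
    (hI : M.Indep I) : rk M (M.closure I) = I.ncard :=
  rk_eq_ncard_of_basis hE hI.isBasis_closure


lemma ncard_Iio_nat (n : ℕ) : (Set.Iio n).ncard = n := by
  rw [← Finset.coe_Iio, Set.ncard_coe_finset, Nat.card_Iio]

lemma Iio_succ_nat (n : ℕ) : Set.Iio (n + 1) = insert n (Set.Iio n) := by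
  ext j; simp [Nat.lt_succ_iff, le_iff_lt_or_eq, or_comm]

lemma rk_mdel_eq (M : Matroid α) (S : Set α) :
    rk (mdel M S) (M.E \ S) = rk M (M.E \ S) := by
  unfold rk mdel
  congr 1
  ext n
  simp only [Set.mem_setOf_eq, Matroid.restrict_indep_iff]
  constructor
  · rintro ⟨I, ⟨h1, h2⟩, h3, h4⟩; exact ⟨I, h1, h3, h4⟩
  · rintro ⟨I, h1, h3, h4⟩; exact ⟨I, ⟨h1, h3⟩, h3, h4⟩

/-- `r(M \ S) = r(M)` iff some flag of `M` does not collapse in `M \ S`. -/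
theorem rank_delete_eq_iff_flag_not_collapse (M : Matroid α) (hfin : M.E.Finite)
    (S : Set α) (hSE : S ⊆ M.E) (hne : S.Nonempty) (k : ℕ) (hk : rk M M.E = k) :
    rk (mdel M S) (M.E \ S) = k ↔
      ∃ X : ℕ → Set α, IsFlag M k X ∧ ∀ i < k, X i \ S ≠ X (i + 1) \ S := by
  rw [rk_mdel_eq]
  constructor
  · -- forward direction
    intro h
    obtain ⟨B, hB⟩ := M.exists_isBasis (M.E \ S) diff_subset
    have hBE : B ⊆ M.E \ S := hB.subset
    have hBfin : B.Finite := hfin.subset hB.indep.subset_ground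
    have hBcard : B.ncard = k := by
      rw [← rk_eq_ncard_of_basis hfin hB, h]
    have hscard : hBfin.toFinset.card = k := by
      rw [← Set.ncard_eq_toFinset_card _ hBfin, hBcard]
    let e := Finset.equivFinOfCardEq hscard
    let b : ℕ → α := fun i => if hi : i < k then (e.symm ⟨i, hi⟩ : α) else hne.choose
    have hbB : ∀ i < k, b i ∈ B := by
      intro i hi
      simp only [b, dif_pos hi]
      exact hBfin.mem_toFinset.mp (e.symm ⟨i, hi⟩).2
    have hbinj : Set.InjOn b (Set.Iio k) := by
      intro i hi j hj hij
      simp only [Set.mem_Iio] at hi hj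
      simp only [b, dif_pos hi, dif_pos hj] at hij
      exact congrArg Fin.val (e.symm.injective (Subtype.ext hij))
    set g : ℕ → Set α := fun i => b '' Set.Iio i with hg
    have hgB : ∀ i ≤ k, g i ⊆ B := by
      rintro i hik y ⟨j, hj, rfl⟩
      exact hbB j (lt_of_lt_of_le hj hik)
    have hgind : ∀ i ≤ k, M.Indep (g i) := fun i hi => hB.indep.subset (hgB i hi)
    have hgcard : ∀ i ≤ k, (g i).ncard = i := by
      intro i hi
      have hgi : g i = b '' Set.Iio i := rfl
      have hss : Set.Iio i ⊆ Set.Iio k := fun j hj => lt_of_lt_of_le hj hi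
      rw [hgi, Set.ncard_image_of_injOn (Set.InjOn.mono hss hbinj)]
      exact ncard_Iio_nat i
    have hgsucc : ∀ i, g (i + 1) = insert (b i) (g i) := by
      intro i
      simp only [hg, Iio_succ_nat, Set.image_insert_eq]
    have hbnotcl : ∀ i < k, b i ∉ M.closure (g i) := by
      intro i hi
      have hind : M.Indep (g (i + 1)) := hgind (i + 1) hi
      rw [hgsucc] at hind
      have hbi : b i ∉ g i := by
        rintro ⟨j, hj, hbij⟩
        exact absurd (hbinj (Set.mem_Iio.mpr (lt_trans hj hi)) (Set.mem_Iio.mpr hi) hbij)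
          (Nat.ne_of_lt hj)
      have := (hgind i hi.le).insert_indep_iff_of_notMem hbi |>.mp hind
      exact this.2
    refine ⟨fun i => M.closure (g i), ⟨⟨fun i hi => ⟨closure_flat' M _, ?_⟩, fun i hi => ?_⟩, fun i hi => ?_⟩⟩
    · rw [rk_closure_indep hfin (hgind i hi), hgcard i hi]
    · constructor
      · exact M.closure_subset_closure (by rw [hgsucc]; exact Set.subset_insert _ _)
      · intro hsub
        exact hbnotcl i hi <| hsub <| (M.subset_closure _ ((hgB (i+1) hi).trans
          (hB.indep.subset_ground))) (by rw [hgsucc]; exact Set.mem_insert _ _)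
    · intro heq
      have h1 : b i ∈ M.closure (g (i + 1)) \ S := by
        refine ⟨(M.subset_closure _ ((hgB (i+1) hi).trans hB.indep.subset_ground))
          (by rw [hgsucc]; exact Set.mem_insert _ _), ?_⟩
        exact (hBE (hbB i hi)).2
      rw [← heq] at h1
      exact hbnotcl i hi h1.1
  · -- backward direction
    rintro ⟨X, ⟨hflag1, hflag2⟩, hnc⟩
    have hmono : ∀ i j, i ≤ j → j ≤ k → X i ⊆ X j := by
      intro i j hij
      induction j, hij using Nat.le_induction with
      | base => exact fun _ => Subset.rfl
      | succ j hj ih =>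
        intro hjk
        exact (ih (le_trans (Nat.le_succ j) hjk)).trans (hflag2 j hjk).subset
    have hch : ∀ i, i < k → ∃ y, y ∈ X (i + 1) \ S ∧ y ∉ X i \ S := by
      intro i hi
      have hsub : X i \ S ⊆ X (i + 1) \ S :=
        Set.diff_subset_diff_left (hflag2 i hi).subset
      obtain ⟨y, hy1, hy2⟩ := Set.exists_of_ssubset (hsub.ssubset_of_ne (hnc i hi))
      exact ⟨y, hy1, hy2⟩
    set x : ℕ → α := fun i => if hi : i < k then (hch i hi).choose else hne.choose with hx
    have hx1 : ∀ i < k, x i ∈ X (i + 1) := by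
      intro i hi; simp only [hx, dif_pos hi]; exact (hch i hi).choose_spec.1.1
    have hx2 : ∀ i < k, x i ∉ S := by
      intro i hi; simp only [hx, dif_pos hi]; exact (hch i hi).choose_spec.1.2
    have hx3 : ∀ i < k, x i ∉ X i := by
      intro i hi
      simp only [hx, dif_pos hi]
      intro hmem
      exact (hch i hi).choose_spec.2 ⟨hmem, by
        have := (hch i hi).choose_spec.1.2; exact this⟩
    have key : ∀ i, i ≤ k → M.Indep (x '' Set.Iio i) ∧ x '' Set.Iio i ⊆ X i := by
      intro i
      induction i with
      | zero =>
        intro _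
        have h0 : Set.Iio 0 = (∅ : Set ℕ) := by ext j; simp
        rw [h0, Set.image_empty]
        exact ⟨M.empty_indep, Set.empty_subset _⟩
      | succ n ih =>
        intro hnk
        have hn : n < k := hnk
        obtain ⟨hind, hsub⟩ := ih (le_of_lt hn)
        have himg : x '' Set.Iio (n + 1) = insert (x n) (x '' Set.Iio n) := by
          rw [Iio_succ_nat, Set.image_insert_eq]
        have hxE : x n ∈ M.E := (hflag1 (n + 1) hnk).1.subset_ground (hx1 n hn)
        have hxcl : x n ∉ M.closure (x '' Set.Iio n) := by
          intro hmem
          have : M.closure (x '' Set.Iio n) ⊆ X n := by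
            have := M.closure_subset_closure hsub
            rwa [(hflag1 n hn.le).1.closure] at this
          exact hx3 n hn (this hmem)
        constructor
        · rw [himg]
          exact hind.insert_indep_iff.mpr (Or.inl ⟨hxE, hxcl⟩)
        · rw [himg]
          exact Set.insert_subset (hx1 n hn) (hsub.trans (hmono n (n + 1) (Nat.le_succ n) hnk))
    obtain ⟨hIind, hIsub⟩ := key k le_rfl
    have hxinj : Set.InjOn x (Set.Iio k) := by
      have haux : ∀ i j, i < j → j < k → x i ≠ x j := by
        intro i j hij hjk heq
        have h1 : x i ∈ X j := hmono (i + 1) j hij hjk.le (hx1 i (lt_trans hij hjk))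
        rw [heq] at h1
        exact hx3 j hjk h1
      intro i hi j hj hij
      rcases lt_trichotomy i j with h | h | h
      · exact absurd hij (haux i j h hj)
      · exact h
      · exact absurd hij.symm (haux j i h hi)
    have hIcard : (x '' Set.Iio k).ncard = k := by
      rw [Set.ncard_image_of_injOn hxinj, ncard_Iio_nat]
    have hIES : x '' Set.Iio k ⊆ M.E \ S := by
      rintro y ⟨j, hj, rfl⟩
      exact ⟨hIsub ⟨j, hj, rfl⟩ |> (hflag1 k le_rfl).1.subset_ground, hx2 j hj⟩
    apply le_antisymm
    · rw [← hk]
      exact rk_mono hfin diff_subset Subset.rfl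
    · rw [← hIcard]
      exact indep_ncard_le_rk hfin hIind hIES diff_subset

end ConePaper
end
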